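/- Let P = B ∪ R be a doubly collinear point set with |B| = |R| = n ≥ 1 that is one-sided, i.e., all points of R lie strictly on one side of the line l_B. Let r* be the red point farthest from x. Then in every bichromatic perfect non-crossing matching of P, the point matched to r* is an extremal blue point, i.e., a blue point b such that no point of B lies on the open half-line of l_B starting at b that does not contain x. -/

import Mathlib

noncomputable section

open scoped InnerProductSpace

/-- The Euclidean plane. -/
abbrev Pt : Type := EuclideanSpace ℝ (Fin 2)

/-- The determinant of two plane vectors (twice the signed area). -/
def det2 (u v : Pt) : ℝ := u 0 * v 1 - u 1 * v 0

/-- The open half-line starting at `x` with direction `u`. -/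
def halfLine (x u : Pt) : Set Pt := {y | ∃ t : ℝ, 0 < t ∧ y = x + t • u}

/-- The open half-line starting at `a` and passing through `c` (it contains `c`). -/
def rayThrough (a c : Pt) : Set Pt := {y | ∃ s : ℝ, 0 < s ∧ y = a + s • (c - a)}

/-- `σ` encodes a bichromatic perfect non-crossing matching of the blue points `B` and the red
points `R`: it restricts to a bijection from `R` onto `B`, and the closed segments induced by
two distinct edges are disjoint. -/
def IsBM (B R : Finset Pt) (σ : Pt → Pt) : Prop :=
  Set.BijOn σ (↑R) (↑B) ∧
  (∀ r ∈ R, ∀ r' ∈ R, r ≠ r' →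
    segment ℝ r (σ r) ∩ segment ℝ r' (σ r') = ∅)

/-- The bichromatic edge `{r, b}` is feasible: some bichromatic perfect non-crossing matching
of `B ∪ R` contains it. -/
def BFeasible (B R : Finset Pt) (r b : Pt) : Prop :=
  ∃ σ, IsBM B R σ ∧ σ r = b

set_option maxHeartbeats 1000000 in
/-- Let `P = B ∪ R` be a one-sided doubly collinear point set (all red points
strictly on one side of the blue line) with `|B| = |R| = n ≥ 1`, and let `r*` be the red point
farthest from `x`. Then in every bichromatic perfect non-crossing matching, the partner of `r*`
is an extremal blue point: a blue point such that no point of `B` lies on the open half-line of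
the blue line starting at it and not containing `x`. -/
theorem osdc_farthest_red_matched_to_extremal_blue (n : ℕ) (hn : 1 ≤ n)
    (x u v : Pt) (hu : u ≠ 0) (hv : v ≠ 0) (hnp : det2 u v ≠ 0) (B R : Finset Pt)
    (hB : ∀ b ∈ B, ∃ t : ℝ, t ≠ 0 ∧ b = x + t • u)
    (hR : ∀ r ∈ R, ∃ t : ℝ, t ≠ 0 ∧ r = x + t • v)
    (hcB : B.card = n) (hcR : R.card = n)
    (honesided : (∀ r ∈ R, 0 < det2 u (r - x)) ∨ (∀ r ∈ R, det2 u (r - x) < 0))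
    (rstar : Pt) (hrstar : rstar ∈ R) (hfar : ∀ r ∈ R, dist x r ≤ dist x rstar)
    (σ : Pt → Pt) (hσ : IsBM B R σ) :
    σ rstar ∈ B ∧
      ∀ b' ∈ B, b' ∉ rayThrough (σ rstar) (σ rstar + (σ rstar - x)) := by

  obtain ⟨hbij, hdisj⟩ := hσ
  have hbstar : σ rstar ∈ B := hbij.mapsTo hrstar
  refine ⟨hbstar, ?_⟩
  intro b' hb' hray
  obtain ⟨s, hs, hb'eq⟩ := hray
  obtain ⟨p, hp, hpe⟩ := hB _ hbstar
  obtain ⟨a, ha, hae⟩ := hR _ hrstar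
  obtain ⟨r', hr', hσr'⟩ := hbij.surjOn hb'
  obtain ⟨b, hb, hbe⟩ := hR _ hr'
  have hvnorm : (0:ℝ) < ‖v‖ := norm_pos_iff.mpr hv
  -- b' = x + ((1+s)*p) • u
  have hb'eq2 : b' = x + ((1 + s) * p) • u := by
    rw [hb'eq, hpe]; module
  -- r' ≠ rstar
  have hne : r' ≠ rstar := by
    intro h
    have h1 : b' = σ rstar := by rw [← hσr', h]
    have h2 : b' - σ rstar = (s * p) • u := by
      rw [hb'eq2, hpe]; module
    rw [h1, sub_self] at h2
    have : (s * p) ≠ 0 := mul_ne_zero (ne_of_gt hs) hp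
    exact (smul_ne_zero this hu) h2.symm
  -- a ≠ b
  have hab_ne : b ≠ a := by
    intro h; apply hne; rw [hbe, hae, h]
  -- same sign: a * b > 0
  have hdet : ∀ t : ℝ, det2 u ((x + t • v) - x) = t * det2 u v := by
    intro t
    simp only [det2, add_sub_cancel_left, PiLp.smul_apply, smul_eq_mul]
    ring
  have habpos : 0 < a * b := by
    rcases honesided with hpos | hneg
    · have h1 := hpos _ hrstar; have h2 := hpos _ hr'
      rw [hae, hdet] at h1; rw [hbe, hdet] at h2
      nlinarith [sq_nonneg (det2 u v)]
    · have h1 := hneg _ hrstar; have h2 := hneg _ hr'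
      rw [hae, hdet] at h1; rw [hbe, hdet] at h2
      nlinarith [sq_nonneg (det2 u v)]
  -- |b| ≤ |a|
  have hdist : ∀ t : ℝ, dist x (x + t • v) = |t| * ‖v‖ := by
    intro t; rw [dist_self_add_right, norm_smul, Real.norm_eq_abs]
  have habs : |b| ≤ |a| := by
    have := hfar _ hr'
    rw [hbe, hdist] at this
    rw [hae, hdist] at this
    exact le_of_mul_le_mul_right this hvnorm
  -- set β := b / a, L := 1 + s
  set β : ℝ := b / a with hβdef
  set L : ℝ := 1 + s with hLdef
  have hL1 : 1 < L := by simp [hLdef]; linarith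
  have hβpos : 0 < β := by
    rcases mul_pos_iff.mp habpos with ⟨h1, h2⟩ | ⟨h1, h2⟩
    · exact div_pos h2 h1
    · exact div_pos_of_neg_of_neg h2 h1
  have hβlt : β < 1 := by
    have h1 : β ≤ 1 := by
      calc β ≤ |β| := le_abs_self β
      _ = |b| / |a| := abs_div b a
      _ ≤ 1 := by
          rw [div_le_one (abs_pos.mpr ha)]; exact habs
    rcases lt_or_eq_of_le h1 with h | h
    · exact h
    · exfalso; apply hab_ne; rw [hβdef, div_eq_one_iff_eq ha] at h; exact h
  have hLβ : 0 < L - β := by linarith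
  have hLβ' : L - β ≠ 0 := ne_of_gt hLβ
  set φ : ℝ := (1 - β) / (L - β) with hφdef
  set θ : ℝ := L * (1 - β) / (L - β) with hθdef
  have hφ0 : 0 ≤ φ := div_nonneg (by linarith) (le_of_lt hLβ)
  have hφ1 : φ ≤ 1 := by
    rw [hφdef, div_le_one hLβ]; linarith
  have hβL : β ≤ L * β := by
    have := mul_le_mul_of_nonneg_right (le_of_lt hL1) (le_of_lt hβpos)
    linarith
  have hθ0 : 0 ≤ θ := div_nonneg (by nlinarith [hβL]) (le_of_lt hLβ)
  have hθ1 : θ ≤ 1 := by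
    rw [hθdef, div_le_one hLβ]; nlinarith [hβL]
  have hba : b = β * a := by rw [hβdef, div_mul_cancel₀ b ha]
  -- scalar coefficient identities
  have hc1 : θ * p = φ * (L * p) := by
    rw [hθdef, hφdef]; ring
  have hc2 : (1 - θ) * a = (1 - φ) * b := by
    rw [hθdef, hφdef, hba]; field_simp; ring
  -- the crossing point
  set z : Pt := x + (θ * p) • u + ((1 - θ) * a) • v with hzdef
  have hz1 : z ∈ segment ℝ rstar (σ rstar) := by
    refine ⟨1 - θ, θ, by linarith, hθ0, by ring, ?_⟩
    rw [hpe, hae, hzdef]; module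
  have hz2 : z ∈ segment ℝ r' (σ r') := by
    refine ⟨1 - φ, φ, by linarith, hφ0, by ring, ?_⟩
    rw [hσr', hbe, hb'eq2, hzdef, hc1, hc2]
    module
  have hempty := hdisj rstar hrstar r' hr' (Ne.symm hne)
  exact Set.eq_empty_iff_forall_notMem.mp hempty z ⟨hz1, hz2⟩
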